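/- Fix N, D ≥ 1, matrices W^Q, W^K, W^V ∈ ℝ^{D×D}, and scalars ν > 0, τ > 0, ε > 0. For X ∈ ℝ^{N×D} with rows x₁,…,x_N, define for each i the ε-smoothed ℓ2-normalized vectors qᵢ = (W^Q)ᵀxᵢ / √(‖(W^Q)ᵀxᵢ‖₂² + ε), kᵢ = (W^K)ᵀxᵢ / √(‖(W^K)ᵀxᵢ‖₂² + ε), vᵢ = (W^V)ᵀxᵢ / √(‖(W^V)ᵀxᵢ‖₂² + ε), stack them as rows of Q, K, V ∈ ℝ^{N×D}, let P ∈ ℝ^{N×N} be the row-wise softmax of τQKᵀ, and define SCSA(X) = ν P V ∈ ℝ^{N×D}. Then SCSA, viewed as a map from ℝ^{ND} to ℝ^{ND} (entries of X flattened), is Lipschitz continuous with respect to the Euclidean norm, with Lipschitz constant at most 2N(N−1) · ν τ ε^{−1/2} ‖W^K‖₂ + 2(N−1) · ν τ ε^{−1/2} ‖W^Q‖₂ + 2N · ν ε^{−1/2} ‖(W^V)ᵀ‖₂. -/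

import Mathlib

open Matrix

/-- Scaled cosine similarity attention: rows of `X` are mapped to ε-smoothed
ℓ2-normalized queries/keys/values `qᵢ, kᵢ, vᵢ`, `P` is the row-wise softmax of
`τ Q Kᵀ`, and the output is `ν P V`. -/
noncomputable def scsa {N D : ℕ} (WQ WK WV : Matrix (Fin D) (Fin D) ℝ)
    (ν τ ε : ℝ) (X : Fin N → Fin D → ℝ) : Fin N → Fin D → ℝ :=
  let nrm : Matrix (Fin D) (Fin D) ℝ → (Fin D → ℝ) → (Fin D → ℝ) := fun W x =>
    fun d => Wᵀ.mulVec x d / Real.sqrt ((∑ e, (Wᵀ.mulVec x e) ^ 2) + ε)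
  let q : Fin N → Fin D → ℝ := fun i => nrm WQ (X i)
  let k : Fin N → Fin D → ℝ := fun j => nrm WK (X j)
  let v : Fin N → Fin D → ℝ := fun j => nrm WV (X j)
  let P : Fin N → Fin N → ℝ := fun i j =>
    Real.exp (τ * ∑ d, q i d * k j d) / ∑ l, Real.exp (τ * ∑ d, q i d * k l d)
  fun i d => ν * ∑ j, P i j * v j d

/-- The spectral norm (largest singular value) of a matrix `A`, defined as
`sup_{‖x‖₂ = 1} ‖Ax‖₂`. -/
noncomputable def specNorm {M D : ℕ} (A : Matrix (Fin M) (Fin D) ℝ) : ℝ :=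
  sSup {c : ℝ | ∃ x : EuclideanSpace ℝ (Fin D), ‖x‖ = 1 ∧
    c = ‖Matrix.toEuclideanLin A x‖}

open Matrix

noncomputable def en {n : ℕ} (x : Fin n → ℝ) : ℝ := Real.sqrt (∑ i, x i ^ 2)

lemma en_nonneg {n : ℕ} (x : Fin n → ℝ) : 0 ≤ en x := Real.sqrt_nonneg _

lemma sq_en {n : ℕ} (x : Fin n → ℝ) : en x ^ 2 = ∑ i, x i ^ 2 :=
  Real.sq_sqrt (Finset.sum_nonneg fun _ _ => sq_nonneg _)

lemma en_le {n : ℕ} {x : Fin n → ℝ} {c : ℝ} (hc : 0 ≤ c) (h : ∑ i, x i ^ 2 ≤ c ^ 2) :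
    en x ≤ c := by
  rw [en, show c = Real.sqrt (c ^ 2) by rw [Real.sqrt_sq hc]]
  exact Real.sqrt_le_sqrt h

lemma abs_le_en {n : ℕ} (x : Fin n → ℝ) (i : Fin n) : |x i| ≤ en x := by
  rw [en, ← Real.sqrt_sq_eq_abs]
  exact Real.sqrt_le_sqrt (Finset.single_le_sum (fun j _ => sq_nonneg (x j)) (Finset.mem_univ i))

lemma cs {n : ℕ} (x y : Fin n → ℝ) : |∑ i, x i * y i| ≤ en x * en y := by
  have h := Finset.sum_mul_sq_le_sq_mul_sq Finset.univ x y
  have h2 : (∑ i, x i * y i) ^ 2 ≤ (en x * en y) ^ 2 := by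
    rw [mul_pow, sq_en, sq_en]; exact h
  have := Real.sqrt_le_sqrt h2
  rwa [Real.sqrt_sq_eq_abs, Real.sqrt_sq (mul_nonneg (en_nonneg x) (en_nonneg y))] at this

lemma en_add_le {n : ℕ} (x y : Fin n → ℝ) : en (fun i => x i + y i) ≤ en x + en y := by
  refine en_le (add_nonneg (en_nonneg x) (en_nonneg y)) ?_
  have hxy : ∑ i, x i * y i ≤ en x * en y := (le_abs_self _).trans (cs x y)
  have : ∑ i, (x i + y i) ^ 2 = (∑ i, x i ^ 2) + 2 * (∑ i, x i * y i) + ∑ i, y i ^ 2 := by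
    rw [Finset.mul_sum, ← Finset.sum_add_distrib, ← Finset.sum_add_distrib]
    exact Finset.sum_congr rfl fun i _ => by ring
  rw [this]
  have hx := sq_en x; have hy := sq_en y
  nlinarith [en_nonneg x, en_nonneg y]

lemma en_smul {n : ℕ} (c : ℝ) (x : Fin n → ℝ) : en (fun i => c * x i) = |c| * en x := by
  rw [en, en]
  have : ∑ i, (c * x i) ^ 2 = c ^ 2 * ∑ i, x i ^ 2 := by
    rw [Finset.mul_sum]; exact Finset.sum_congr rfl fun i _ => by ring
  rw [this, Real.sqrt_mul (sq_nonneg c), Real.sqrt_sq_eq_abs]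

lemma en_sum_le {n : ℕ} {ι : Type*} (s : Finset ι) (f : ι → Fin n → ℝ) :
    en (fun d => ∑ j ∈ s, f j d) ≤ ∑ j ∈ s, en (f j) := by
  classical
  induction s using Finset.cons_induction with
  | empty => simp [en]
  | cons a s ha ih =>
    rw [Finset.sum_cons]
    calc en (fun d => ∑ j ∈ Finset.cons a s ha, f j d)
        = en (fun d => f a d + ∑ j ∈ s, f j d) := by
          congr 1; funext d; rw [Finset.sum_cons]
      _ ≤ en (f a) + en (fun d => ∑ j ∈ s, f j d) := en_add_le _ _
      _ ≤ en (f a) + ∑ j ∈ s, en (f j) := by linarith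

lemma en_mono {n : ℕ} {x w : Fin n → ℝ} (h : ∀ i, |x i| ≤ w i) : en x ≤ en w := by
  rw [en, en]
  refine Real.sqrt_le_sqrt (Finset.sum_le_sum fun i _ => ?_)
  have h1 := h i
  have h2 := abs_nonneg (x i)
  nlinarith [sq_abs (x i)]

noncomputable def nrmz {n : ℕ} (ε : ℝ) (y : Fin n → ℝ) : Fin n → ℝ :=
  fun d => y d / Real.sqrt ((∑ e, y e ^ 2) + ε)

lemma en_nrmz_le_one {n : ℕ} {ε : ℝ} (hε : 0 < ε) (y : Fin n → ℝ) : en (nrmz ε y) ≤ 1 := by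
  have hpos : 0 < (∑ e, y e ^ 2) + ε :=
    add_pos_of_nonneg_of_pos (Finset.sum_nonneg fun _ _ => sq_nonneg _) hε
  refine en_le zero_le_one ?_
  have hsq : Real.sqrt ((∑ e, y e ^ 2) + ε) ^ 2 = (∑ e, y e ^ 2) + ε := Real.sq_sqrt hpos.le
  have : ∑ d, nrmz ε y d ^ 2 = (∑ d, y d ^ 2) / ((∑ e, y e ^ 2) + ε) := by
    rw [Finset.sum_div]
    exact Finset.sum_congr rfl fun d _ => by rw [nrmz, div_pow, hsq]
  rw [this, one_pow]
  exact (div_le_one hpos).mpr (by linarith)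

lemma nrmz_lip {n : ℕ} {ε : ℝ} (hε : 0 < ε) (y z : Fin n → ℝ) :
    en (fun d => nrmz ε y d - nrmz ε z d) ≤ 2 * (Real.sqrt ε)⁻¹ * en (fun d => y d - z d) := by
  set s := Real.sqrt ((∑ e, y e ^ 2) + ε) with hsdef
  set t := Real.sqrt ((∑ e, z e ^ 2) + ε) with htdef
  have hεs : 0 < Real.sqrt ε := Real.sqrt_pos.mpr hε
  have hsumy : (0:ℝ) ≤ ∑ e, y e ^ 2 :=
    Finset.sum_nonneg fun e _ => sq_nonneg (y e)
  have hsumz : (0:ℝ) ≤ ∑ e, z e ^ 2 :=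
    Finset.sum_nonneg fun e _ => sq_nonneg (z e)
  have hs : Real.sqrt ε ≤ s := Real.sqrt_le_sqrt (by linarith)
  have ht : Real.sqrt ε ≤ t := Real.sqrt_le_sqrt (by linarith)
  have hs0 : 0 < s := lt_of_lt_of_le hεs hs
  have ht0 : 0 < t := lt_of_lt_of_le hεs ht
  have heny : en y ≤ s := by
    refine en_le hs0.le ?_
    rw [hsdef, Real.sq_sqrt (by linarith)]
    linarith
  have henz : en z ≤ t := by
    refine en_le ht0.le ?_
    rw [htdef, Real.sq_sqrt (by linarith)]
    linarith
  set w := en (fun d => y d - z d) with hwdef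
  have hw0 : 0 ≤ w := en_nonneg _
  -- |s - t| ≤ w
  have hst : |s - t| ≤ w := by
    have hsq : s ^ 2 - t ^ 2 = en y ^ 2 - en z ^ 2 := by
      rw [hsdef, htdef, Real.sq_sqrt (by linarith), Real.sq_sqrt (by linarith),
        sq_en, sq_en]
      ring
    have htri : |en y - en z| ≤ w := by
      rw [abs_le]
      constructor
      · have : en z ≤ en (fun d => z d - y d) + en y := by
          have h2 := en_add_le (fun d => z d - y d) y
          have h3 : (fun d => z d - y d + y d) = z := by funext d; ring
          rw [h3] at h2; linarith
        have h4 : en (fun d => z d - y d) = w := by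
          rw [hwdef]
          have : (fun d => z d - y d) = (fun d => (-1) * (y d - z d)) := by funext d; ring
          rw [this, en_smul]; norm_num
        linarith
      · have : en y ≤ w + en z := by
          have h2 := en_add_le (fun d => y d - z d) z
          have h3 : (fun d => y d - z d + z d) = y := by funext d; ring
          rw [h3] at h2; linarith
        linarith
    have habs : |s - t| * (s + t) = |en y - en z| * (en y + en z) := by
      rw [← abs_of_pos (show (0:ℝ) < s + t by linarith),
        ← abs_of_nonneg (add_nonneg (en_nonneg y) (en_nonneg z)), ← abs_mul, ← abs_mul]
      congr 1
      nlinarith [hsq]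
    have h5 : |en y - en z| * (en y + en z) ≤ w * (s + t) := by
      have := mul_le_mul htri (show en y + en z ≤ s + t by linarith)
        (add_nonneg (en_nonneg y) (en_nonneg z)) hw0
      linarith
    have h6 : |s - t| * (s + t) ≤ w * (s + t) := by rw [habs]; exact h5
    exact le_of_mul_le_mul_right h6 (by linarith)
  -- pointwise decomposition
  have hpt : ∀ d, nrmz ε y d - nrmz ε z d
      = s⁻¹ * (y d - z d) + ((t - s) / (s * t)) * z d := by
    intro d
    rw [nrmz, nrmz, ← hsdef, ← htdef]
    field_simp
    ring
  calc en (fun d => nrmz ε y d - nrmz ε z d)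
      = en (fun d => s⁻¹ * (y d - z d) + ((t - s) / (s * t)) * z d) := by
        congr 1; funext d; exact hpt d
    _ ≤ en (fun d => s⁻¹ * (y d - z d)) + en (fun d => ((t - s) / (s * t)) * z d) :=
        en_add_le _ _
    _ = |s⁻¹| * w + |(t - s) / (s * t)| * en z := by rw [en_smul, en_smul, hwdef]
    _ ≤ (Real.sqrt ε)⁻¹ * w + (Real.sqrt ε)⁻¹ * w := by
        have hb1 : |s⁻¹| * w ≤ (Real.sqrt ε)⁻¹ * w := by
          rw [abs_of_pos (inv_pos.mpr hs0)]
          exact mul_le_mul_of_nonneg_right (inv_anti₀ hεs hs) hw0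
        have hb2 : |(t - s) / (s * t)| * en z ≤ (Real.sqrt ε)⁻¹ * w := by
          rw [abs_div, abs_of_pos (mul_pos hs0 ht0)]
          have h1 : |t - s| ≤ w := by rw [abs_sub_comm]; exact hst
          have h2 : |t - s| / (s * t) * en z ≤ w / (s * t) * t := by
            have ha : |t - s| / (s * t) ≤ w / (s * t) := by
              gcongr
            exact mul_le_mul ha henz (en_nonneg z)
              (div_nonneg hw0 (mul_pos hs0 ht0).le)
          have h3 : w / (s * t) * t = w / s := by
            field_simp
          have h4 : w / s ≤ (Real.sqrt ε)⁻¹ * w := by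
            rw [div_eq_mul_inv, mul_comm]
            exact mul_le_mul_of_nonneg_right (inv_anti₀ hεs hs) hw0
          linarith
        linarith
    _ = 2 * (Real.sqrt ε)⁻¹ * w := by ring

lemma en_symm_norm {D : ℕ} (u : Fin D → ℝ) :
    ‖(WithLp.equiv 2 (Fin D → ℝ)).symm u‖ = en u := by
  rw [EuclideanSpace.norm_eq, en]
  congr 1
  exact Finset.sum_congr rfl fun i _ => by
    rw [Real.norm_eq_abs, sq_abs]; rfl

lemma norm_toEL {M D : ℕ} (A : Matrix (Fin M) (Fin D) ℝ) (u : Fin D → ℝ) :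
    ‖Matrix.toEuclideanLin A ((WithLp.equiv 2 (Fin D → ℝ)).symm u)‖ = en (A.mulVec u) := by
  rw [Matrix.toEuclideanLin_apply]; exact en_symm_norm (A.mulVec u)

lemma en_mulVec_le_frob {M D : ℕ} (A : Matrix (Fin M) (Fin D) ℝ) (u : Fin D → ℝ) :
    en (A.mulVec u) ≤ Real.sqrt (∑ i, ∑ j, A i j ^ 2) * en u := by
  refine en_le (mul_nonneg (Real.sqrt_nonneg _) (en_nonneg _)) ?_
  have hterm : ∀ i, (A.mulVec u i) ^ 2 ≤ (∑ j, A i j ^ 2) * en u ^ 2 := by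
    intro i
    have h1 : A.mulVec u i = ∑ j, A i j * u j := rfl
    have h2 := cs (fun j => A i j) u
    have h3 : (∑ j, A i j * u j) ^ 2 ≤ (en (fun j => A i j) * en u) ^ 2 := by
      rw [← sq_abs (∑ j, A i j * u j)]
      exact pow_le_pow_left₀ (abs_nonneg _) h2 2
    rw [h1]
    calc (∑ j, A i j * u j) ^ 2 ≤ (en (fun j => A i j) * en u) ^ 2 := h3
      _ = (∑ j, A i j ^ 2) * en u ^ 2 := by rw [mul_pow, sq_en]
  calc ∑ i, (A.mulVec u i) ^ 2 ≤ ∑ i, (∑ j, A i j ^ 2) * en u ^ 2 :=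
        Finset.sum_le_sum fun i _ => hterm i
    _ = (∑ i, ∑ j, A i j ^ 2) * en u ^ 2 := by rw [Finset.sum_mul]
    _ = (Real.sqrt (∑ i, ∑ j, A i j ^ 2) * en u) ^ 2 := by
        rw [mul_pow, Real.sq_sqrt (by positivity)]

lemma specNorm_bddAbove {M D : ℕ} (A : Matrix (Fin M) (Fin D) ℝ) :
    BddAbove {c : ℝ | ∃ x : EuclideanSpace ℝ (Fin D), ‖x‖ = 1 ∧
      c = ‖Matrix.toEuclideanLin A x‖} := by
  refine ⟨Real.sqrt (∑ i, ∑ j, A i j ^ 2), fun c hc => ?_⟩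
  obtain ⟨x, hx, rfl⟩ := hc
  set u : Fin D → ℝ := (WithLp.equiv 2 (Fin D → ℝ)) x with hu
  have hxu : x = (WithLp.equiv 2 (Fin D → ℝ)).symm u := by rw [hu, Equiv.symm_apply_apply]
  have henu : en u = 1 := by rw [← en_symm_norm, ← hxu, hx]
  rw [hxu, norm_toEL]
  calc en (A.mulVec u) ≤ Real.sqrt (∑ i, ∑ j, A i j ^ 2) * en u := en_mulVec_le_frob A u
    _ = Real.sqrt (∑ i, ∑ j, A i j ^ 2) := by rw [henu, mul_one]

lemma specNorm_nonneg {M D : ℕ} (hD : 1 ≤ D) (A : Matrix (Fin M) (Fin D) ℝ) :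
    0 ≤ specNorm A := by
  set x0 : EuclideanSpace ℝ (Fin D) := EuclideanSpace.single (⟨0, hD⟩ : Fin D) (1 : ℝ) with hx0
  have hn : ‖x0‖ = 1 := by rw [hx0, EuclideanSpace.norm_single, norm_one]
  exact le_csSup_of_le (specNorm_bddAbove A) ⟨x0, hn, rfl⟩ (norm_nonneg _)

lemma en_mulVec_le_spec {M D : ℕ} (hD : 1 ≤ D) (A : Matrix (Fin M) (Fin D) ℝ)
    (x : Fin D → ℝ) : en (A.mulVec x) ≤ specNorm A * en x := by
  rcases eq_or_lt_of_le (en_nonneg x) with h0 | hc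
  · have hsum : ∑ i, x i ^ 2 = 0 := by rw [← sq_en, ← h0]; norm_num
    have hx0 : x = 0 := by
      funext i
      have := (Finset.sum_eq_zero_iff_of_nonneg
        (fun i _ => sq_nonneg (x i))).mp hsum i (Finset.mem_univ i)
      exact pow_eq_zero_iff two_ne_zero |>.mp this
    rw [hx0, Matrix.mulVec_zero]
    simp [en]
  · set c := en x with hcdef
    set u : Fin D → ℝ := fun j => c⁻¹ * x j with hu2
    have henu : en u = 1 := by
      rw [hu2, en_smul, abs_of_pos (inv_pos.mpr hc), ← hcdef]
      field_simp
    have hmem : en (A.mulVec u) ∈ {c : ℝ | ∃ x : EuclideanSpace ℝ (Fin D), ‖x‖ = 1 ∧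
        c = ‖Matrix.toEuclideanLin A x‖} :=
      ⟨(WithLp.equiv 2 (Fin D → ℝ)).symm u, by rw [en_symm_norm, henu],
        (norm_toEL A u).symm⟩
    have hle : en (A.mulVec u) ≤ specNorm A := le_csSup (specNorm_bddAbove A) hmem
    have hAu : A.mulVec u = fun i => c⁻¹ * A.mulVec x i := by
      have h5 : u = c⁻¹ • x := rfl
      rw [h5, Matrix.mulVec_smul]
      rfl
    have heq : en (A.mulVec u) = c⁻¹ * en (A.mulVec x) := by
      rw [hAu, en_smul, abs_of_pos (inv_pos.mpr hc)]
    rw [heq] at hle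
    have := mul_le_mul_of_nonneg_left hle hc.le
    rw [mul_comm c (specNorm A)] at this
    calc en (A.mulVec x) = c * (c⁻¹ * en (A.mulVec x)) := by field_simp
      _ ≤ specNorm A * c := this

lemma en_tmulVec_le_spec {D : ℕ} (hD : 1 ≤ D) (A : Matrix (Fin D) (Fin D) ℝ)
    (x : Fin D → ℝ) : en (Aᵀ.mulVec x) ≤ specNorm A * en x := by
  set w := Aᵀ.mulVec x with hwdef
  have key : en w * en w ≤ (specNorm A * en x) * en w := by
    have h1 : ∑ e, w e ^ 2 = x ⬝ᵥ (A *ᵥ w) := by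
      rw [Matrix.dotProduct_mulVec, ← Matrix.mulVec_transpose, ← hwdef, dotProduct]
      exact Finset.sum_congr rfl fun e _ => sq (w e) ▸ rfl
    have h2 : x ⬝ᵥ (A *ᵥ w) ≤ en x * en (A.mulVec w) := by
      rw [dotProduct]
      exact (le_abs_self _).trans (cs x (A.mulVec w))
    have h3 : en (A.mulVec w) ≤ specNorm A * en w := en_mulVec_le_spec hD A w
    have h4 : en w * en w = en w ^ 2 := (sq (en w)).symm
    rw [h4, sq_en, h1]
    calc x ⬝ᵥ (A *ᵥ w) ≤ en x * en (A.mulVec w) := h2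
      _ ≤ en x * (specNorm A * en w) :=
          mul_le_mul_of_nonneg_left h3 (en_nonneg x)
      _ = (specNorm A * en x) * en w := by ring
  rcases eq_or_lt_of_le (en_nonneg w) with h0 | hw
  · rw [← h0]
    exact mul_nonneg (specNorm_nonneg hD A) (en_nonneg x)
  · exact le_of_mul_le_mul_right key hw

/-- Mean absolute deviation about the mean is at most half the range. -/
lemma mad_le {n : ℕ} (p d : Fin n → ℝ) (hp : ∀ j, 0 ≤ p j) (hs : ∑ j, p j = 1)
    {r : ℝ} (hr : 0 ≤ r) (hd : ∀ j, |d j| ≤ r) :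
    ∑ j, p j * |d j - ∑ l, p l * d l| ≤ r := by
  classical
  set m := ∑ l, p l * d l with hm
  have hmr : |m| ≤ r := by
    calc |m| ≤ ∑ l, |p l * d l| := Finset.abs_sum_le_sum_abs _ _
      _ ≤ ∑ l, p l * r := Finset.sum_le_sum fun l _ => by
          rw [abs_mul, abs_of_nonneg (hp l)]
          exact mul_le_mul_of_nonneg_left (hd l) (hp l)
      _ = r := by rw [← Finset.sum_mul, hs, one_mul]
  set A := ∑ j, p j * max (d j - m) 0 with hA
  set B := ∑ j, p j * max (m - d j) 0 with hB
  have hA0 : 0 ≤ A :=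
    Finset.sum_nonneg fun j _ => mul_nonneg (hp j) (le_max_right _ _)
  have hT : ∑ j, p j * |d j - m| = A + B := by
    rw [hA, hB, ← Finset.sum_add_distrib]
    refine Finset.sum_congr rfl fun j _ => ?_
    have habs : |d j - m| = max (d j - m) 0 + max (m - d j) 0 := by
      rcases le_total (d j) m with h | h
      · rw [abs_of_nonpos (by linarith), max_eq_right (by linarith),
          max_eq_left (by linarith)]; ring
      · rw [abs_of_nonneg (by linarith), max_eq_left (by linarith),
          max_eq_right (by linarith)]; ring
    rw [habs]; ring
  have hABid : A = B := by
    have h1 : A - B = ∑ j, p j * (d j - m) := by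
      rw [hA, hB, ← Finset.sum_sub_distrib]
      refine Finset.sum_congr rfl fun j _ => ?_
      rcases le_total (d j) m with h | h
      · rw [max_eq_right (by linarith), max_eq_left (by linarith)]; ring
      · rw [max_eq_left (by linarith), max_eq_right (by linarith)]; ring
    have h2 : ∑ j, p j * (d j - m) = (∑ j, p j * d j) - (∑ j, p j) * m := by
      rw [Finset.sum_mul, ← Finset.sum_sub_distrib]
      exact Finset.sum_congr rfl fun j _ => by ring
    have : A - B = 0 := by rw [h1, h2, hs, one_mul, ← hm, sub_self]
    linarith
  set Pp := ∑ j ∈ Finset.univ.filter (fun j => m < d j), p j with hPp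
  set Pm := ∑ j ∈ Finset.univ.filter (fun j => d j < m), p j with hPm
  have hPp0 : 0 ≤ Pp := Finset.sum_nonneg fun j _ => hp j
  have hPm0 : 0 ≤ Pm := Finset.sum_nonneg fun j _ => hp j
  have hPsum : Pp + Pm ≤ 1 := by
    rw [hPp, hPm, ← Finset.sum_union]
    · rw [← hs]
      exact Finset.sum_le_sum_of_subset_of_nonneg (Finset.subset_univ _) fun j _ _ => hp j
    · rw [Finset.disjoint_left]
      intro j hj1 hj2
      simp only [Finset.mem_filter] at hj1 hj2
      linarith [hj1.2, hj2.2]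
  have hA_le : A ≤ (r - m) * Pp := by
    rw [hA, ← Finset.sum_filter_add_sum_filter_not Finset.univ (fun j => m < d j)
      (fun j => p j * max (d j - m) 0)]
    have h2 : ∑ j ∈ Finset.univ.filter (fun j => ¬ m < d j), p j * max (d j - m) 0 = 0 := by
      refine Finset.sum_eq_zero fun j hj => ?_
      simp only [Finset.mem_filter, not_lt] at hj
      rw [max_eq_right (by linarith [hj.2]), mul_zero]
    rw [h2, add_zero, hPp, Finset.mul_sum]
    refine Finset.sum_le_sum fun j hj => ?_
    simp only [Finset.mem_filter] at hj
    have hdj := hd j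
    have : max (d j - m) 0 ≤ r - m := by
      refine max_le ?_ ?_ <;> [skip; skip]
      · have := (abs_le.mp hdj).2; linarith
      · linarith [hj.2, (abs_le.mp hdj).2]
    calc p j * max (d j - m) 0 ≤ p j * (r - m) := mul_le_mul_of_nonneg_left this (hp j)
      _ = (r - m) * p j := by ring
  have hB_le : B ≤ (r + m) * Pm := by
    rw [hB, ← Finset.sum_filter_add_sum_filter_not Finset.univ (fun j => d j < m)
      (fun j => p j * max (m - d j) 0)]
    have h2 : ∑ j ∈ Finset.univ.filter (fun j => ¬ d j < m), p j * max (m - d j) 0 = 0 := by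
      refine Finset.sum_eq_zero fun j hj => ?_
      simp only [Finset.mem_filter, not_lt] at hj
      rw [max_eq_right (by linarith [hj.2]), mul_zero]
    rw [h2, add_zero, hPm, Finset.mul_sum]
    refine Finset.sum_le_sum fun j hj => ?_
    simp only [Finset.mem_filter] at hj
    have hdj := hd j
    have : max (m - d j) 0 ≤ r + m := by
      refine max_le ?_ ?_
      · have := (abs_le.mp hdj).1; linarith
      · linarith [(abs_le.mp hmr).1]
    calc p j * max (m - d j) 0 ≤ p j * (r + m) := mul_le_mul_of_nonneg_left this (hp j)
      _ = (r + m) * p j := by ring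
  rw [hT]
  have hB0 : 0 ≤ B := hABid ▸ hA0
  have hrm1 : (0:ℝ) ≤ r - m := by linarith [(abs_le.mp hmr).2]
  have hrm2 : (0:ℝ) ≤ r + m := by linarith [(abs_le.mp hmr).1]
  have hAB2 : A * B ≤ ((r - m) * Pp) * ((r + m) * Pm) :=
    mul_le_mul hA_le hB_le hB0 (mul_nonneg hrm1 hPp0)
  have h4p : 4 * (Pp * Pm) ≤ 1 := by nlinarith [sq_nonneg (Pp - Pm)]
  have h5 : 4 * (A * B) ≤ (r - m) * (r + m) := by
    have h6 : ((r - m) * Pp) * ((r + m) * Pm) = (r - m) * (r + m) * (Pp * Pm) := by ring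
    nlinarith [mul_nonneg hrm1 hrm2]
  have hsq : (A + B) ^ 2 = 4 * (A * B) := by rw [hABid]; ring
  have h7 : (A + B) ^ 2 ≤ r ^ 2 := by rw [hsq]; nlinarith [sq_nonneg m]
  nlinarith [sq_nonneg (A + B - r)]

set_option maxHeartbeats 1000000 in
/-- ℓ1 bound for the difference of two softmax vectors whose logits differ by at most `r`. -/
lemma smax_l1 {n : ℕ} (a b : Fin n → ℝ) {r : ℝ} (hr : 0 ≤ r)
    (h : ∀ j, |b j - a j| ≤ r) :
    ∑ j, |Real.exp (b j) / (∑ l, Real.exp (b l)) -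
          Real.exp (a j) / (∑ l, Real.exp (a l))| ≤ r := by
  rcases Nat.eq_zero_or_pos n with hn | hn
  · subst hn; simpa using hr
  haveI : Nonempty (Fin n) := ⟨⟨0, hn⟩⟩
  classical
  set d : Fin n → ℝ := fun j => b j - a j with hd
  set E : ℝ → Fin n → ℝ := fun t j => Real.exp (a j + t * d j) with hE
  set S : ℝ → ℝ := fun t => ∑ l, E t l with hS
  have hSpos : ∀ t, 0 < S t := fun t =>
    Finset.sum_pos (fun l _ => Real.exp_pos _) Finset.univ_nonempty
  set sg : Fin n → ℝ := fun j => if E 1 j / S 1 - E 0 j / S 0 < 0 then -1 else 1 with hsgdef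
  have hsg : ∀ j, |sg j| ≤ 1 := by
    intro j; simp only [hsgdef]; split_ifs <;> norm_num
  set S' : ℝ → ℝ := fun t => ∑ l, E t l * d l with hS'
  set ψ : ℝ → ℝ := fun t => ∑ j, sg j * (E t j / S t) with hψ
  set ψ' : ℝ → ℝ := fun t =>
    ∑ j, sg j * ((E t j * d j * S t - E t j * S' t) / S t ^ 2) with hψ'
  have hEj : ∀ t j, HasDerivAt (fun t => E t j) (E t j * d j) t := by
    intro t j
    have h1 : HasDerivAt (fun t : ℝ => a j + t * d j) (d j) t := by
      simpa using (hasDerivAt_mul_const (d j)).const_add (a j)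
    simpa [hE] using h1.exp
  have hSd : ∀ t, HasDerivAt S (S' t) t := fun t => HasDerivAt.fun_sum (fun l _ => hEj t l)
  have hderiv : ∀ t, HasDerivAt ψ (ψ' t) t := by
    intro t
    exact HasDerivAt.fun_sum fun j _ =>
      (((hEj t j).div (hSd t) (hSpos t).ne')).const_mul (sg j)
  have hbound : ∀ t, |ψ' t| ≤ r := by
    intro t
    have hmain : ∑ j, (E t j / S t) * |d j - ∑ l, (E t l / S t) * d l| ≤ r := by
      refine mad_le (fun j => E t j / S t) d
        (fun j => div_nonneg (Real.exp_pos _).le (hSpos t).le) ?_ hr h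
      rw [← Finset.sum_div, div_self (hSpos t).ne']
    calc |ψ' t| ≤ ∑ j, |sg j * ((E t j * d j * S t - E t j * S' t) / S t ^ 2)| :=
          Finset.abs_sum_le_sum_abs _ _
      _ ≤ ∑ j, (E t j / S t) * |d j - ∑ l, (E t l / S t) * d l| := by
          refine Finset.sum_le_sum fun j _ => ?_
          rw [abs_mul]
          have hid : (E t j * d j * S t - E t j * S' t) / S t ^ 2
              = (E t j / S t) * (d j - S' t / S t) := by
            have := (hSpos t).ne'; field_simp
          have hm : S' t / S t = ∑ l, (E t l / S t) * d l := by
            rw [hS', Finset.sum_div]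
            exact Finset.sum_congr rfl fun l _ => (div_mul_eq_mul_div _ _ _).symm
          rw [hid, hm, abs_mul, abs_of_nonneg (div_nonneg (Real.exp_pos _).le (hSpos t).le)]
          have h1 : |sg j| * ((E t j / S t) * |d j - ∑ l, E t l / S t * d l|)
              ≤ 1 * ((E t j / S t) * |d j - ∑ l, E t l / S t * d l|) :=
            mul_le_mul_of_nonneg_right (hsg j)
              (mul_nonneg (div_nonneg (Real.exp_pos _).le (hSpos t).le) (abs_nonneg _))
          linarith
      _ ≤ r := hmain
  have hmvt : |ψ 1 - ψ 0| ≤ r := by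
    have := Convex.norm_image_sub_le_of_norm_hasDerivWithin_le
      (f := ψ) (f' := ψ') (s := Set.univ) (C := r)
      (fun x _ => (hderiv x).hasDerivWithinAt)
      (fun x _ => by simpa using hbound x)
      convex_univ (Set.mem_univ (0:ℝ)) (Set.mem_univ (1:ℝ))
    simpa using this
  have hE1 : ∀ j, E 1 j = Real.exp (b j) := by
    intro j; simp only [hE, hd]; congr 1; ring
  have hE0 : ∀ j, E 0 j = Real.exp (a j) := by
    intro j; simp only [hE, hd]; congr 1; ring
  have hS1 : S 1 = ∑ l, Real.exp (b l) := by
    simp only [hS]; exact Finset.sum_congr rfl fun l _ => hE1 l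
  have hS0 : S 0 = ∑ l, Real.exp (a l) := by
    simp only [hS]; exact Finset.sum_congr rfl fun l _ => hE0 l
  have hstep : (∑ j, |Real.exp (b j) / (∑ l, Real.exp (b l)) -
      Real.exp (a j) / (∑ l, Real.exp (a l))|) = ψ 1 - ψ 0 := by
    have h1 : (∑ j, |Real.exp (b j) / (∑ l, Real.exp (b l)) -
        Real.exp (a j) / (∑ l, Real.exp (a l))|) = ∑ j, |E 1 j / S 1 - E 0 j / S 0| :=
      Finset.sum_congr rfl fun j _ => by rw [hE1 j, hE0 j, hS1, hS0]
    have h2 : ψ 1 - ψ 0 = ∑ j, sg j * (E 1 j / S 1 - E 0 j / S 0) := by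
      simp only [hψ, ← Finset.sum_sub_distrib]
      exact Finset.sum_congr rfl fun j _ => by ring
    rw [h1, h2]
    refine Finset.sum_congr rfl fun j _ => ?_
    simp only [hsgdef]
    split_ifs with hc
    · rw [abs_of_neg hc]; ring
    · rw [abs_of_nonneg (not_lt.mp hc)]; ring
  rw [hstep]
  exact (le_abs_self _).trans hmvt

set_option maxHeartbeats 2000000 in
/-- scaled cosine similarity attention, viewed as a map `ℝ^{ND} → ℝ^{ND}`
with the Euclidean norm, is Lipschitz continuous with constant at most
`2N(N−1) ντ ε^{-1/2} ‖W^K‖₂ + 2(N−1) ντ ε^{-1/2} ‖W^Q‖₂ + 2N ν ε^{-1/2} ‖(W^V)ᵀ‖₂`,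
where `‖·‖₂` on matrices is the spectral norm. -/
theorem scsa_lipschitz_l2 {N D : ℕ} (hN : 1 ≤ N) (hD : 1 ≤ D)
    (WQ WK WV : Matrix (Fin D) (Fin D) ℝ) (ν τ ε : ℝ)
    (hν : 0 < ν) (hτ : 0 < τ) (hε : 0 < ε) :
    ∀ X₁ X₂ : Fin N → Fin D → ℝ,
      Real.sqrt (∑ i, ∑ d,
          (scsa WQ WK WV ν τ ε X₁ i d - scsa WQ WK WV ν τ ε X₂ i d) ^ 2) ≤
        (2 * (N : ℝ) * ((N : ℝ) - 1) * ν * τ * (Real.sqrt ε)⁻¹ * specNorm WK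
          + 2 * ((N : ℝ) - 1) * ν * τ * (Real.sqrt ε)⁻¹ * specNorm WQ
          + 2 * (N : ℝ) * ν * (Real.sqrt ε)⁻¹ * specNorm WVᵀ) *
          Real.sqrt (∑ i, ∑ d, (X₁ i d - X₂ i d) ^ 2) := by
  intro X₁ X₂
  classical
  have hε' : 0 < Real.sqrt ε := Real.sqrt_pos.mpr hε
  have hSQ0 : 0 ≤ specNorm WQ := specNorm_nonneg hD WQ
  have hSK0 : 0 ≤ specNorm WK := specNorm_nonneg hD WK
  have hSV0 : 0 ≤ specNorm WVᵀ := specNorm_nonneg hD WVᵀ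
  set Kq := 2 * (Real.sqrt ε)⁻¹ * specNorm WQ with hKq
  set Kk := 2 * (Real.sqrt ε)⁻¹ * specNorm WK with hKk
  set Kv := 2 * (Real.sqrt ε)⁻¹ * specNorm WVᵀ with hKv
  have hKq0 : 0 ≤ Kq := mul_nonneg (by positivity) hSQ0
  have hKk0 : 0 ≤ Kk := mul_nonneg (by positivity) hSK0
  have hKv0 : 0 ≤ Kv := mul_nonneg (by positivity) hSV0
  set dx : Fin N → Fin D → ℝ := fun i d => X₁ i d - X₂ i d with hdx
  set W := Real.sqrt (∑ i, ∑ d, (X₁ i d - X₂ i d) ^ 2) with hW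
  have hW_en : W = en (fun i => en (dx i)) := by
    rw [hW, en]
    congr 1
    exact Finset.sum_congr rfl fun i _ => (sq_en (dx i)).symm
  have hW0 : 0 ≤ W := Real.sqrt_nonneg _
  have hrowW : ∀ i, en (dx i) ≤ W := by
    intro i
    rw [hW_en]
    have h := abs_le_en (fun i => en (dx i)) i
    rwa [abs_of_nonneg (en_nonneg _)] at h
  -- normalized rows
  set q1 : Fin N → Fin D → ℝ := fun i => nrmz ε (WQᵀ.mulVec (X₁ i)) with hq1
  set q2 : Fin N → Fin D → ℝ := fun i => nrmz ε (WQᵀ.mulVec (X₂ i)) with hq2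
  set k1 : Fin N → Fin D → ℝ := fun j => nrmz ε (WKᵀ.mulVec (X₁ j)) with hk1
  set k2 : Fin N → Fin D → ℝ := fun j => nrmz ε (WKᵀ.mulVec (X₂ j)) with hk2
  set v1 : Fin N → Fin D → ℝ := fun j => nrmz ε (WVᵀ.mulVec (X₁ j)) with hv1
  set v2 : Fin N → Fin D → ℝ := fun j => nrmz ε (WVᵀ.mulVec (X₂ j)) with hv2
  have hq2n : ∀ i, en (q2 i) ≤ 1 := fun i => en_nrmz_le_one hε _
  have hk1n : ∀ j, en (k1 j) ≤ 1 := fun j => en_nrmz_le_one hε _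
  have hv1n : ∀ j, en (v1 j) ≤ 1 := fun j => en_nrmz_le_one hε _
  have hmvsub : ∀ (M : Matrix (Fin D) (Fin D) ℝ) i,
      (fun e => M.mulVec (X₁ i) e - M.mulVec (X₂ i) e) = M.mulVec (dx i) := by
    intro M i
    funext e
    have h : dx i = X₁ i - X₂ i := rfl
    rw [h, Matrix.mulVec_sub]
    rfl
  have hΔq : ∀ i, en (fun e => q1 i e - q2 i e) ≤ Kq * en (dx i) := by
    intro i
    refine (nrmz_lip hε _ _).trans ?_
    rw [hmvsub WQᵀ i, hKq]
    have h := en_tmulVec_le_spec hD WQ (dx i)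
    calc 2 * (Real.sqrt ε)⁻¹ * en ((WQᵀ).mulVec (dx i))
        ≤ 2 * (Real.sqrt ε)⁻¹ * (specNorm WQ * en (dx i)) :=
          mul_le_mul_of_nonneg_left h (by positivity)
      _ = 2 * (Real.sqrt ε)⁻¹ * specNorm WQ * en (dx i) := by ring
  have hΔk : ∀ j, en (fun e => k1 j e - k2 j e) ≤ Kk * W := by
    intro j
    refine (nrmz_lip hε _ _).trans ?_
    rw [hmvsub WKᵀ j, hKk]
    have h := en_tmulVec_le_spec hD WK (dx j)
    calc 2 * (Real.sqrt ε)⁻¹ * en ((WKᵀ).mulVec (dx j))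
        ≤ 2 * (Real.sqrt ε)⁻¹ * (specNorm WK * en (dx j)) :=
          mul_le_mul_of_nonneg_left h (by positivity)
      _ = (2 * (Real.sqrt ε)⁻¹ * specNorm WK) * en (dx j) := by ring
      _ ≤ (2 * (Real.sqrt ε)⁻¹ * specNorm WK) * W :=
          mul_le_mul_of_nonneg_left (hrowW j) (mul_nonneg (by positivity) hSK0)
  have hΔv : ∀ j, en (fun e => v1 j e - v2 j e) ≤ Kv * W := by
    intro j
    refine (nrmz_lip hε _ _).trans ?_
    rw [hmvsub WVᵀ j, hKv]
    have h := en_mulVec_le_spec hD WVᵀ (dx j)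
    calc 2 * (Real.sqrt ε)⁻¹ * en ((WVᵀ).mulVec (dx j))
        ≤ 2 * (Real.sqrt ε)⁻¹ * (specNorm WVᵀ * en (dx j)) :=
          mul_le_mul_of_nonneg_left h (by positivity)
      _ = (2 * (Real.sqrt ε)⁻¹ * specNorm WVᵀ) * en (dx j) := by ring
      _ ≤ (2 * (Real.sqrt ε)⁻¹ * specNorm WVᵀ) * W :=
          mul_le_mul_of_nonneg_left (hrowW j) (mul_nonneg (by positivity) hSV0)
  -- softmax matrices
  set A1 : Fin N → Fin N → ℝ := fun i j => τ * ∑ e, q1 i e * k1 j e with hA1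
  set A2 : Fin N → Fin N → ℝ := fun i j => τ * ∑ e, q2 i e * k2 j e with hA2
  set P1 : Fin N → Fin N → ℝ := fun i j =>
    Real.exp (A1 i j) / ∑ l, Real.exp (A1 i l) with hP1
  set P2 : Fin N → Fin N → ℝ := fun i j =>
    Real.exp (A2 i j) / ∑ l, Real.exp (A2 i l) with hP2
  have hsc1 : ∀ i d, scsa WQ WK WV ν τ ε X₁ i d = ν * ∑ j, P1 i j * v1 j d :=
    fun i d => rfl
  have hsc2 : ∀ i d, scsa WQ WK WV ν τ ε X₂ i d = ν * ∑ j, P2 i j * v2 j d :=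
    fun i d => rfl
  haveI : Nonempty (Fin N) := ⟨⟨0, hN⟩⟩
  have hSpos2 : ∀ i, 0 < ∑ l, Real.exp (A2 i l) := fun i =>
    Finset.sum_pos (fun l _ => Real.exp_pos _) Finset.univ_nonempty
  have hP2nn : ∀ i j, 0 ≤ P2 i j := fun i j =>
    div_nonneg (Real.exp_pos _).le (hSpos2 i).le
  have hP2sum : ∀ i, ∑ j, P2 i j = 1 := by
    intro i
    rw [hP2]
    rw [← Finset.sum_div, div_self (hSpos2 i).ne']
  set κ : ℝ := if N = 1 then 0 else 1 with hκdef
  have hκ0 : 0 ≤ κ := by rw [hκdef]; split_ifs <;> norm_num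
  -- bound on the logit differences
  have hlog : ∀ i j, |A1 i j - A2 i j| ≤ τ * (Kq * en (dx i)) + τ * (Kk * W) := by
    intro i j
    have hsplit : A1 i j - A2 i j
        = τ * ((∑ e, (q1 i e - q2 i e) * k1 j e) + ∑ e, q2 i e * (k1 j e - k2 j e)) := by
      simp only [hA1, hA2]
      have h : (∑ e, (q1 i e - q2 i e) * k1 j e) + ∑ e, q2 i e * (k1 j e - k2 j e)
          = (∑ e, q1 i e * k1 j e) - ∑ e, q2 i e * k2 j e := by
        rw [← Finset.sum_add_distrib, ← Finset.sum_sub_distrib]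
        exact Finset.sum_congr rfl fun e _ => by ring
      rw [h]; ring
    have hc1 : |∑ e, (q1 i e - q2 i e) * k1 j e| ≤ Kq * en (dx i) := by
      refine (cs _ _).trans ?_
      calc en (fun e => q1 i e - q2 i e) * en (k1 j)
          ≤ en (fun e => q1 i e - q2 i e) * 1 :=
            mul_le_mul_of_nonneg_left (hk1n j) (en_nonneg _)
        _ = en (fun e => q1 i e - q2 i e) := mul_one _
        _ ≤ Kq * en (dx i) := hΔq i
    have hc2 : |∑ e, q2 i e * (k1 j e - k2 j e)| ≤ Kk * W := by
      refine (cs _ _).trans ?_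
      calc en (q2 i) * en (fun e => k1 j e - k2 j e)
          ≤ 1 * en (fun e => k1 j e - k2 j e) :=
            mul_le_mul_of_nonneg_right (hq2n i) (en_nonneg _)
        _ = en (fun e => k1 j e - k2 j e) := one_mul _
        _ ≤ Kk * W := hΔk j
    rw [hsplit, abs_mul, abs_of_pos hτ]
    calc τ * |(∑ e, (q1 i e - q2 i e) * k1 j e) + ∑ e, q2 i e * (k1 j e - k2 j e)|
        ≤ τ * (|∑ e, (q1 i e - q2 i e) * k1 j e| + |∑ e, q2 i e * (k1 j e - k2 j e)|) :=
          mul_le_mul_of_nonneg_left (abs_add_le _ _) hτ.le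
      _ ≤ τ * (Kq * en (dx i) + Kk * W) :=
          mul_le_mul_of_nonneg_left (add_le_add hc1 hc2) hτ.le
      _ = τ * (Kq * en (dx i)) + τ * (Kk * W) := by ring
  -- row-wise softmax ℓ1 bound
  have hΔP : ∀ i, ∑ j, |P1 i j - P2 i j| ≤ κ * (τ * (Kq * en (dx i)) + τ * (Kk * W)) := by
    by_cases hN1 : N = 1
    · subst hN1
      intro i
      have hP1one : ∀ j, P1 i j = 1 := by
        intro j
        simp only [hP1, Fin.sum_univ_one]
        have hj : j = 0 := Subsingleton.elim j 0
        rw [hj, div_self (Real.exp_ne_zero _)]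
      have hP2one : ∀ j, P2 i j = 1 := by
        intro j
        simp only [hP2, Fin.sum_univ_one]
        have hj : j = 0 := Subsingleton.elim j 0
        rw [hj, div_self (Real.exp_ne_zero _)]
      have hz : ∑ j, |P1 i j - P2 i j| = 0 := by
        refine Finset.sum_eq_zero fun j _ => ?_
        rw [hP1one j, hP2one j, sub_self, abs_zero]
      rw [hz, hκdef, if_pos rfl, zero_mul]
    · intro i
      have hκ1 : κ = 1 := by rw [hκdef, if_neg hN1]
      rw [hκ1, one_mul]
      have hr0 : 0 ≤ τ * (Kq * en (dx i)) + τ * (Kk * W) :=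
        add_nonneg (mul_nonneg hτ.le (mul_nonneg hKq0 (en_nonneg _)))
          (mul_nonneg hτ.le (mul_nonneg hKk0 hW0))
      have h := smax_l1 (fun j => A2 i j) (fun j => A1 i j) hr0 (fun j => hlog i j)
      simpa [hP1, hP2] using h
  -- per-row bound on the output difference
  have hrow : ∀ i, en (fun d => scsa WQ WK WV ν τ ε X₁ i d - scsa WQ WK WV ν τ ε X₂ i d)
      ≤ ν * τ * (κ * Kq) * en (dx i) + ν * (τ * (κ * Kk) * W + Kv * W) := by
    intro i
    have hid : (fun d => scsa WQ WK WV ν τ ε X₁ i d - scsa WQ WK WV ν τ ε X₂ i d)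
        = fun d => ν * ∑ j, ((P1 i j - P2 i j) * v1 j d + P2 i j * (v1 j d - v2 j d)) := by
      funext d
      rw [hsc1, hsc2, ← mul_sub]
      congr 1
      rw [← Finset.sum_sub_distrib]
      exact Finset.sum_congr rfl fun j _ => by ring
    rw [hid]
    have hsmul : en (fun d => ν * ∑ j, ((P1 i j - P2 i j) * v1 j d + P2 i j * (v1 j d - v2 j d)))
        = ν * en (fun d => ∑ j, ((P1 i j - P2 i j) * v1 j d + P2 i j * (v1 j d - v2 j d))) := by
      rw [en_smul, abs_of_pos hν]
    rw [hsmul]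
    have hterm : ∀ j, en (fun d => (P1 i j - P2 i j) * v1 j d + P2 i j * (v1 j d - v2 j d))
        ≤ |P1 i j - P2 i j| + P2 i j * (Kv * W) := by
      intro j
      refine (en_add_le _ _).trans ?_
      rw [en_smul, en_smul]
      have h1 : |P1 i j - P2 i j| * en (v1 j) ≤ |P1 i j - P2 i j| * 1 :=
        mul_le_mul_of_nonneg_left (hv1n j) (abs_nonneg _)
      have h2 : |P2 i j| * en (fun d => v1 j d - v2 j d) ≤ P2 i j * (Kv * W) := by
        rw [abs_of_nonneg (hP2nn i j)]
        exact mul_le_mul_of_nonneg_left (hΔv j) (hP2nn i j)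
      linarith
    calc ν * en (fun d => ∑ j, ((P1 i j - P2 i j) * v1 j d + P2 i j * (v1 j d - v2 j d)))
        ≤ ν * ∑ j, en (fun d => (P1 i j - P2 i j) * v1 j d + P2 i j * (v1 j d - v2 j d)) :=
          mul_le_mul_of_nonneg_left (en_sum_le _ _) hν.le
      _ ≤ ν * ∑ j, (|P1 i j - P2 i j| + P2 i j * (Kv * W)) :=
          mul_le_mul_of_nonneg_left (Finset.sum_le_sum fun j _ => hterm j) hν.le
      _ = ν * ((∑ j, |P1 i j - P2 i j|) + (∑ j, P2 i j) * (Kv * W)) := by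
          rw [Finset.sum_add_distrib, Finset.sum_mul]
      _ = ν * ((∑ j, |P1 i j - P2 i j|) + Kv * W) := by rw [hP2sum i, one_mul]
      _ ≤ ν * (κ * (τ * (Kq * en (dx i)) + τ * (Kk * W)) + Kv * W) :=
          mul_le_mul_of_nonneg_left (by linarith [hΔP i]) hν.le
      _ = ν * τ * (κ * Kq) * en (dx i) + ν * (τ * (κ * Kk) * W + Kv * W) := by ring
  -- assemble the Frobenius bound
  set c0 := ν * (τ * (κ * Kk) * W + Kv * W) with hc0
  have hc00 : 0 ≤ c0 :=
    mul_nonneg hν.le (add_nonneg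
      (mul_nonneg (mul_nonneg hτ.le (mul_nonneg hκ0 hKk0)) hW0)
      (mul_nonneg hKv0 hW0))
  have hLHS : Real.sqrt (∑ i, ∑ d,
        (scsa WQ WK WV ν τ ε X₁ i d - scsa WQ WK WV ν τ ε X₂ i d) ^ 2)
      = en (fun i => en (fun d => scsa WQ WK WV ν τ ε X₁ i d - scsa WQ WK WV ν τ ε X₂ i d)) := by
    rw [en]
    congr 1
    exact Finset.sum_congr rfl fun i _ => (sq_en _).symm
  have hsqrtN : Real.sqrt (N : ℝ) ≤ (N : ℝ) := by
    have h1 : (1 : ℝ) ≤ (N : ℝ) := by exact_mod_cast hN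
    have h2 : Real.sqrt (N : ℝ) ≤ Real.sqrt ((N : ℝ) ^ 2) :=
      Real.sqrt_le_sqrt (by nlinarith)
    rwa [Real.sqrt_sq (by linarith)] at h2
  have hconst : en (fun _ : Fin N => c0) = Real.sqrt (N : ℝ) * c0 := by
    rw [en]
    have h : ∑ _i : Fin N, c0 ^ 2 = (N : ℝ) * c0 ^ 2 := by
      rw [Finset.sum_const, Finset.card_univ, Fintype.card_fin, nsmul_eq_mul]
    rw [h, Real.sqrt_mul (Nat.cast_nonneg N), Real.sqrt_sq hc00]
  have hmain : Real.sqrt (∑ i, ∑ d,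
        (scsa WQ WK WV ν τ ε X₁ i d - scsa WQ WK WV ν τ ε X₂ i d) ^ 2)
      ≤ ν * τ * (κ * Kq) * W + Real.sqrt (N : ℝ) * c0 := by
    rw [hLHS]
    calc en (fun i => en (fun d => scsa WQ WK WV ν τ ε X₁ i d - scsa WQ WK WV ν τ ε X₂ i d))
        ≤ en (fun i => ν * τ * (κ * Kq) * en (dx i) + c0) := by
          refine en_mono fun i => ?_
          rw [abs_of_nonneg (en_nonneg _)]
          exact hrow i
      _ ≤ en (fun i => ν * τ * (κ * Kq) * en (dx i)) + en (fun _ : Fin N => c0) := en_add_le _ _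
      _ = ν * τ * (κ * Kq) * W + Real.sqrt (N : ℝ) * c0 := by
          rw [en_smul, hconst,
            abs_of_nonneg (mul_nonneg (mul_nonneg hν.le hτ.le) (mul_nonneg hκ0 hKq0)),
            hW_en]
  refine hmain.trans ?_
  -- final numeric comparison
  by_cases hN2 : 2 ≤ N
  · have hN2' : (2 : ℝ) ≤ (N : ℝ) := by exact_mod_cast hN2
    have hκ1 : κ = 1 := by rw [hκdef, if_neg (by omega)]
    rw [hc0, hκ1, hKq, hKk, hKv]
    simp only [one_mul, mul_one]
    have hb1 : ν * τ * (2 * (Real.sqrt ε)⁻¹ * specNorm WQ) * W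
        ≤ 2 * ((N : ℝ) - 1) * ν * τ * (Real.sqrt ε)⁻¹ * specNorm WQ * W := by
      have hc : 0 ≤ 2 * ν * τ * (Real.sqrt ε)⁻¹ * specNorm WQ * W := by
        have := mul_nonneg (mul_nonneg (mul_nonneg (mul_nonneg (by norm_num : (0:ℝ) ≤ 2)
          hν.le) hτ.le) (by positivity : (0:ℝ) ≤ (Real.sqrt ε)⁻¹)) hSQ0
        exact mul_nonneg this hW0
      nlinarith
    have hb2 : Real.sqrt (N : ℝ) * (ν * (τ * (2 * (Real.sqrt ε)⁻¹ * specNorm WK * W)))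
        ≤ 2 * (N : ℝ) * ((N : ℝ) - 1) * ν * τ * (Real.sqrt ε)⁻¹ * specNorm WK * W := by
      have hc : 0 ≤ 2 * ν * τ * (Real.sqrt ε)⁻¹ * specNorm WK * W := by
        have := mul_nonneg (mul_nonneg (mul_nonneg (mul_nonneg (by norm_num : (0:ℝ) ≤ 2)
          hν.le) hτ.le) (by positivity : (0:ℝ) ≤ (Real.sqrt ε)⁻¹)) hSK0
        exact mul_nonneg this hW0
      have hsN : Real.sqrt (N : ℝ) ≤ (N : ℝ) * ((N : ℝ) - 1) := by
        nlinarith [hsqrtN]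
      have hsN0 : 0 ≤ Real.sqrt (N : ℝ) := Real.sqrt_nonneg _
      nlinarith [mul_le_mul_of_nonneg_right hsN hc]
    have hb3 : Real.sqrt (N : ℝ) * (ν * (2 * (Real.sqrt ε)⁻¹ * specNorm WVᵀ * W))
        ≤ 2 * (N : ℝ) * ν * (Real.sqrt ε)⁻¹ * specNorm WVᵀ * W := by
      have hc : 0 ≤ 2 * ν * (Real.sqrt ε)⁻¹ * specNorm WVᵀ * W := by
        have := mul_nonneg (mul_nonneg (mul_nonneg (by norm_num : (0:ℝ) ≤ 2)
          hν.le) (by positivity : (0:ℝ) ≤ (Real.sqrt ε)⁻¹)) hSV0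
        exact mul_nonneg this hW0
      nlinarith [mul_le_mul_of_nonneg_right hsqrtN hc, Real.sqrt_nonneg (N : ℝ)]
    nlinarith [hb1, hb2, hb3]
  · -- N = 1
    have hN1 : N = 1 := by omega
    have hκz : κ = 0 := by rw [hκdef, if_pos hN1]
    have hNr : ((N : ℝ)) = 1 := by rw [hN1]; norm_num
    rw [hc0, hκz, hNr, Real.sqrt_one, hKv]
    ring_nf
    exact le_rfl
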